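/- For n = 2: with f₁(z) = ∑ c^{(1)}_m q^m, f₂(z) = ∑ c^{(2)}_m q^m of polynomial-growth coefficients, and α₂ ≥ 1 an integer, the function F̃(z) := f₁(z) · ∫_{i∞}^z f₂(z₂)(z₂ - z)^{α₂-1} dz₂ has Fourier expansion F̃(z) = -Γ(α₂)/(-2πi)^{α₂} · ∑_{m₁ > m₂ > 0} c^{(1)}_{m₁-m₂} c^{(2)}_{m₂} m₂^{-α₂} e^{2πi m₁ z}. -/

import Mathlib

open scoped BigOperators
open MeasureTheory

lemma core_summable (M y : ℝ) (hM : M ≠ 0) (hy : 0 < y) :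
    Summable (fun m : ℕ => (m:ℝ) ^ M * Real.exp (-(y * m))) := by
  have hr : ‖Real.exp (-y)‖ < 1 := by
    rw [Real.norm_eq_abs, abs_of_pos (Real.exp_pos _)]
    exact Real.exp_lt_one_iff.mpr (by linarith)
  have h := summable_pow_mul_geometric_of_norm_lt_one (R := ℝ) (Nat.ceil M + 1) hr
  refine h.of_nonneg_of_le (fun m => by positivity) (fun m => ?_)
  rcases Nat.eq_zero_or_pos m with rfl | hm
  · simp [Real.zero_rpow hM]
  have h1 : (1:ℝ) ≤ (m:ℝ) := by exact_mod_cast hm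
  have : (m:ℝ) ^ M ≤ (m:ℝ) ^ (Nat.ceil M + 1 : ℕ) := by
    rw [← Real.rpow_natCast (m:ℝ) (Nat.ceil M + 1)]
    apply Real.rpow_le_rpow_of_exponent_le h1
    push_cast
    calc M ≤ Nat.ceil M := Nat.le_ceil M
    _ ≤ Nat.ceil M + 1 := by linarith
  calc (m:ℝ) ^ M * Real.exp (-(y*m)) ≤ (m:ℝ) ^ (Nat.ceil M + 1:ℕ) * Real.exp (-(y*m)) := by
        apply mul_le_mul_of_nonneg_right this (Real.exp_pos _).le
  _ = (m:ℝ) ^ (Nat.ceil M + 1:ℕ) * Real.exp (-y) ^ m := by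
        rw [← Real.exp_nat_mul]; ring_nf

lemma real_int (n : ℕ) (r : ℝ) (hr : 0 < r) :
    ∫ t in Set.Ioi (0:ℝ), t^n * Real.exp (-(r*t)) = (1/r)^(n+1) * (Nat.factorial n) := by
  have h := Real.integral_rpow_mul_exp_neg_mul_Ioi (a := n+1) (by positivity) hr
  rw [show ((n:ℝ)+1)-1 = (n:ℝ) by ring] at h
  rw [MeasureTheory.setIntegral_congr_fun measurableSet_Ioi
    (fun t (ht : t ∈ Set.Ioi (0:ℝ)) => by
      rw [← Real.rpow_natCast t n] : Set.EqOn _ (fun t => t ^ (n:ℝ) * Real.exp (-(r*t))) _), h,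
    ← Real.rpow_natCast (1/r) (n+1)]
  push_cast
  rw [Real.Gamma_nat_eq_factorial]

lemma real_integrable (n : ℕ) (r : ℝ) (hr : 0 < r) :
    IntegrableOn (fun t : ℝ => t^n * Real.exp (-(r*t))) (Set.Ioi 0) := by
  have h := integrableOn_rpow_mul_exp_neg_mul_rpow (s := (n:ℝ)) (p := 1) (b := r)
    (by have : (0:ℝ) ≤ n := Nat.cast_nonneg n; linarith) one_pos hr
  refine h.congr_fun (fun t (ht : t ∈ Set.Ioi (0:ℝ)) => ?_) measurableSet_Ioi
  beta_reduce
  rw [Real.rpow_natCast, Real.rpow_one]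
  ring_nf

def pairEquiv : ℕ+ × ℕ+ ≃ {p : ℕ × ℕ // p.2 < p.1 ∧ 0 < p.2} where
  toFun w := ⟨((w.1:ℕ) + (w.2:ℕ), (w.2:ℕ)), by
    constructor
    · have := w.1.pos; omega
    · exact w.2.pos⟩
  invFun p := (⟨(p.1:ℕ×ℕ).1 - (p.1:ℕ×ℕ).2, by have := p.2.1; omega⟩, ⟨(p.1:ℕ×ℕ).2, p.2.2⟩)
  left_inv w := by
    refine Prod.ext ?_ ?_
    · apply PNat.coe_injective; simp
    · apply PNat.coe_injective; simp
  right_inv p := by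
    apply Subtype.ext
    refine Prod.ext ?_ ?_
    · have := p.2.1; simp; omega
    · simp

theorem F_tilde_fourier_expansion
    (f₁ f₂ : ℂ → ℂ) (c₁ c₂ : ℕ → ℂ) (C M : ℝ) (hC : 0 < C) (hM : 0 < M)
    (hb₁ : ∀ m : ℕ, 1 ≤ m → ‖c₁ m‖ ≤ C * (m : ℝ) ^ M)
    (hb₂ : ∀ m : ℕ, 1 ≤ m → ‖c₂ m‖ ≤ C * (m : ℝ) ^ M)
    (hf₁ : ∀ z : ℂ, 0 < z.im →
      f₁ z = ∑' m : ℕ+, c₁ m * Complex.exp (2 * Real.pi * Complex.I * (m : ℂ) * z))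
    (hf₂ : ∀ z : ℂ, 0 < z.im →
      f₂ z = ∑' m : ℕ+, c₂ m * Complex.exp (2 * Real.pi * Complex.I * (m : ℂ) * z))
    (α₂ : ℕ) (hα₂ : 1 ≤ α₂) (z : ℂ) (hz : 0 < z.im) :
    f₁ z * (-(∫ t in Set.Ioi (0 : ℝ),
        f₂ (z + (t : ℂ) * Complex.I) * ((t : ℂ) * Complex.I) ^ (α₂ - 1) * Complex.I))
      = -(Nat.factorial (α₂ - 1) : ℂ) / (-(2 * Real.pi * Complex.I)) ^ α₂ *
          ∑' p : {p : ℕ × ℕ // p.2 < p.1 ∧ 0 < p.2},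
            c₁ ((p : ℕ × ℕ).1 - (p : ℕ × ℕ).2) * c₂ (p : ℕ × ℕ).2 *
              (((p : ℕ × ℕ).2 : ℂ)) ^ (-(α₂ : ℂ)) *
              Complex.exp (2 * Real.pi * Complex.I * ((p : ℕ × ℕ).1 : ℂ) * z) := by
  obtain ⟨n, rfl⟩ : ∃ n, α₂ = n + 1 := ⟨α₂ - 1, by omega⟩
  simp only [Nat.add_sub_cancel]
  set y : ℝ := 2 * Real.pi * z.im with hy_def
  have hy : 0 < y := by positivity
  -- the Fourier-coefficient building blocks
  set K : ℕ+ → ℂ := fun m => c₂ m * Complex.exp (2 * Real.pi * Complex.I * (m : ℂ) * z)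
      * Complex.I ^ (n+1) with hK
  set J : ℕ+ → ℝ := fun m => (1/(2*Real.pi*(m:ℝ)))^(n+1) * (Nat.factorial n) with hJ
  set F : ℕ+ → ℝ → ℂ := fun m t =>
    c₂ m * Complex.exp (2*Real.pi*Complex.I*(m:ℂ)*(z + (t:ℂ)*Complex.I))
      * ((t:ℂ)*Complex.I)^n * Complex.I with hF
  have hFrep : ∀ (m : ℕ+) (t : ℝ),
      F m t = K m * ((t^n * Real.exp (-(2*Real.pi*(m:ℝ)*t)) : ℝ) : ℂ) := by
    intro m t
    simp only [hF, hK]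
    rw [show 2*(Real.pi:ℂ)*Complex.I*(m:ℂ)*(z + (t:ℂ)*Complex.I)
        = 2*Real.pi*Complex.I*(m:ℂ)*z + ((-(2*Real.pi*(m:ℝ)*t):ℝ):ℂ) by
          push_cast
          linear_combination (2*(Real.pi:ℂ)*((m:ℕ):ℂ)*(t:ℂ)) * Complex.I_sq,
      Complex.exp_add, ← Complex.ofReal_exp]
    push_cast
    ring
  have hFint : ∀ m : ℕ+, IntegrableOn (F m) (Set.Ioi 0) := by
    intro m
    have h2 := ((real_integrable n (2*Real.pi*(m:ℝ)) (by positivity)).ofReal (𝕜 := ℂ)).const_mul (K m)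
    have heq : F m = fun t => K m * ((t^n * Real.exp (-(2*Real.pi*(m:ℝ)*t)) : ℝ) : ℂ) :=
      funext (hFrep m)
    rw [heq]; exact h2
  have hqnorm : ∀ m : ℕ+, ‖Complex.exp (2 * Real.pi * Complex.I * (m : ℂ) * z)‖
      = Real.exp (-(y * (m:ℝ))) := by
    intro m
    rw [Complex.norm_exp]
    congr 1
    simp [Complex.mul_re, Complex.mul_im, hy_def]
    ring
  have hKnorm : ∀ m : ℕ+, ‖K m‖ = ‖c₂ m‖ * Real.exp (-(y * (m:ℝ))) := by
    intro m
    rw [hK]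
    rw [norm_mul, norm_mul, norm_pow, Complex.norm_I, one_pow, mul_one, hqnorm]
  have hJ0 : ∀ m : ℕ+, 0 ≤ J m := by
    intro m; rw [hJ]; positivity
  have hJle : ∀ m : ℕ+, J m ≤ (1/(2*Real.pi))^(n+1) * (Nat.factorial n) := by
    intro m
    rw [hJ]
    have h1 : (1:ℝ) ≤ (m:ℝ) := by exact_mod_cast m.one_le
    apply mul_le_mul_of_nonneg_right _ (by positivity)
    apply pow_le_pow_left₀ (by positivity)
    rw [div_le_div_iff₀ (by positivity) (by positivity)]
    nlinarith [Real.pi_pos]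
  have hFnorm : ∀ m : ℕ+, ∫ t in Set.Ioi (0:ℝ), ‖F m t‖ = ‖K m‖ * J m := by
    intro m
    calc ∫ t in Set.Ioi (0:ℝ), ‖F m t‖
        = ∫ t in Set.Ioi (0:ℝ), ‖K m‖ * (t^n * Real.exp (-(2*Real.pi*(m:ℝ)*t))) := by
          apply setIntegral_congr_fun measurableSet_Ioi
          intro t ht
          show ‖F m t‖ = _
          rw [hFrep m t, norm_mul, Complex.norm_real, Real.norm_of_nonneg
            (mul_nonneg (pow_nonneg (le_of_lt ht) n) (Real.exp_pos _).le)]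
      _ = ‖K m‖ * J m := by
          rw [integral_const_mul, real_int n _ (by positivity), hJ]
  have hbound : Summable (fun m : ℕ+ =>
      C * ((1/(2*Real.pi))^(n+1) * (Nat.factorial n : ℝ)) * ((m:ℝ)^M * Real.exp (-(y*(m:ℝ))))) :=
    ((core_summable M y hM.ne' hy).mul_left _).comp_injective PNat.coe_injective
  have hsum2 : Summable (fun m : ℕ+ => ‖K m‖ * J m) := by
    refine hbound.of_nonneg_of_le
      (fun m => mul_nonneg (norm_nonneg _) (hJ0 m)) (fun m => ?_)
    rw [hKnorm]
    calc ‖c₂ m‖ * Real.exp (-(y * (m:ℝ))) * J m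
        ≤ C * (m:ℝ)^M * Real.exp (-(y * (m:ℝ))) * ((1/(2*Real.pi))^(n+1) * (Nat.factorial n)) := by
          apply mul_le_mul (mul_le_mul_of_nonneg_right (hb₂ m m.one_le) (Real.exp_pos _).le)
            (hJle m) (hJ0 m)
          positivity
      _ = C * ((1/(2*Real.pi))^(n+1) * (Nat.factorial n : ℝ)) * ((m:ℝ)^M * Real.exp (-(y*(m:ℝ)))) := by
          ring
  -- value of the inner integral
  have hint_eq : (∫ t in Set.Ioi (0:ℝ),
      f₂ (z + (t:ℂ)*Complex.I) * ((t:ℂ)*Complex.I)^n * Complex.I)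
      = ∑' m : ℕ+, K m * ((J m : ℝ) : ℂ) := by
    have step1 : Set.EqOn (fun t : ℝ => f₂ (z + (t:ℂ)*Complex.I) * ((t:ℂ)*Complex.I)^n * Complex.I)
        (fun t : ℝ => ∑' m : ℕ+, F m t) (Set.Ioi 0) := by
      intro t ht
      have him : 0 < (z + (t:ℂ)*Complex.I).im := by
        simp only [Complex.add_im, Complex.mul_im, Complex.ofReal_re, Complex.I_im,
          Complex.ofReal_im, Complex.I_re, mul_zero, mul_one, zero_mul, add_zero]
        have := Set.mem_Ioi.mp ht
        linarith
      simp only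
      rw [hf₂ _ him, ← tsum_mul_right, ← tsum_mul_right]
    rw [setIntegral_congr_fun measurableSet_Ioi step1,
      ← integral_tsum_of_summable_integral_norm hFint
        ((hsum2.congr (fun m => (hFnorm m).symm)))]
    congr 1
    funext m
    have heq : F m = fun t => K m * ((t^n * Real.exp (-(2*Real.pi*(m:ℝ)*t)) : ℝ) : ℂ) :=
      funext (hFrep m)
    rw [heq, integral_const_mul,
      show (∫ a in Set.Ioi (0:ℝ), ((a^n * Real.exp (-(2*Real.pi*(m:ℝ)*a)) : ℝ):ℂ))
        = ((∫ a in Set.Ioi (0:ℝ), a^n * Real.exp (-(2*Real.pi*(m:ℝ)*a)) : ℝ):ℂ) from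
        integral_ofReal,
      real_int n _ (by positivity), hJ]
  -- summability of the two factor series
  have hsum1 : Summable (fun k : ℕ+ =>
      ‖c₁ k * Complex.exp (2 * Real.pi * Complex.I * (k : ℂ) * z)‖) := by
    have hbound1 : Summable (fun m : ℕ+ => C * ((m:ℝ)^M * Real.exp (-(y*(m:ℝ))))) :=
      ((core_summable M y hM.ne' hy).mul_left _).comp_injective PNat.coe_injective
    refine hbound1.of_nonneg_of_le (fun m => norm_nonneg _) (fun m => ?_)
    rw [norm_mul, hqnorm]
    calc ‖c₁ m‖ * Real.exp (-(y * (m:ℝ)))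
        ≤ C * (m:ℝ)^M * Real.exp (-(y * (m:ℝ))) :=
          mul_le_mul_of_nonneg_right (hb₁ m m.one_le) (Real.exp_pos _).le
      _ = C * ((m:ℝ)^M * Real.exp (-(y*(m:ℝ)))) := by ring
  have hsum2' : Summable (fun m : ℕ+ => ‖-(K m * ((J m : ℝ) : ℂ))‖) := by
    refine hsum2.congr (fun m => ?_)
    have h : ‖-(K m * ((J m : ℝ) : ℂ))‖ = ‖K m‖ * J m := by
      rw [norm_neg, norm_mul, Complex.norm_real, Real.norm_of_nonneg (hJ0 m)]
    exact h.symm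
  -- assemble
  rw [hf₁ z hz, hint_eq, ← tsum_neg,
    tsum_mul_tsum_of_summable_norm hsum1 hsum2',
    ← (pairEquiv.tsum_eq (fun p : {p : ℕ × ℕ // p.2 < p.1 ∧ 0 < p.2} =>
        c₁ ((p : ℕ × ℕ).1 - (p : ℕ × ℕ).2) * c₂ (p : ℕ × ℕ).2 *
          (((p : ℕ × ℕ).2 : ℂ)) ^ (-((n+1 : ℕ) : ℂ)) *
          Complex.exp (2 * Real.pi * Complex.I * ((p : ℕ × ℕ).1 : ℂ) * z))),
    ← tsum_mul_left]
  apply tsum_congr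
  rintro ⟨k, m⟩
  simp only [pairEquiv, Equiv.coe_fn_mk, Nat.add_sub_cancel]
  have hexp : Complex.exp (2 * Real.pi * Complex.I * ((((k:ℕ) + (m:ℕ) : ℕ)) : ℂ) * z)
      = Complex.exp (2 * Real.pi * Complex.I * (k : ℂ) * z)
        * Complex.exp (2 * Real.pi * Complex.I * (m : ℂ) * z) := by
    rw [← Complex.exp_add]
    congr 1
    push_cast
    ring
  rw [hexp, hK, hJ, Complex.cpow_neg, Complex.cpow_natCast]
  have hm0 : ((m:ℕ):ℂ) ≠ 0 := by
    exact_mod_cast (Nat.cast_ne_zero (R := ℂ)).mpr m.ne_zero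
  have hπ : ((Real.pi:ℝ):ℂ) ≠ 0 := Complex.ofReal_ne_zero.mpr Real.pi_ne_zero
  have key : (-(2*(Real.pi:ℂ)*Complex.I))^(n+1)
      = (2*(Real.pi:ℂ))^(n+1) * (Complex.I^(n+1))⁻¹ := by
    rw [← inv_pow, ← mul_pow, Complex.inv_I]
    ring_nf
  rw [key]
  push_cast
  have hI : Complex.I ^ (n+1) ≠ 0 := pow_ne_zero _ Complex.I_ne_zero
  field_simp
  have e : (Real.pi:ℂ) * (Real.pi:ℂ) ^ n * ((m:ℕ):ℂ) * ((m:ℕ):ℂ) ^ n * (Real.pi:ℂ)⁻¹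
      * (Real.pi:ℂ)⁻¹ ^ n * ((m:ℕ):ℂ)⁻¹ * ((m:ℕ):ℂ)⁻¹ ^ n * (1/2:ℂ) ^ n * 2 ^ n = 1 := by
    have h : (Real.pi:ℂ) * (Real.pi:ℂ) ^ n * ((m:ℕ):ℂ) * ((m:ℕ):ℂ) ^ n * (Real.pi:ℂ)⁻¹
        * (Real.pi:ℂ)⁻¹ ^ n * ((m:ℕ):ℂ)⁻¹ * ((m:ℕ):ℂ)⁻¹ ^ n * (1/2:ℂ) ^ n * 2 ^ n
        = ((Real.pi:ℂ) * (Real.pi:ℂ)⁻¹) ^ (n+1) * (((m:ℕ):ℂ) * ((m:ℕ):ℂ)⁻¹) ^ (n+1)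
          * ((1/2:ℂ) ^ n * 2 ^ n) := by ring
    rw [h, mul_inv_cancel₀ hπ, mul_inv_cancel₀ hm0, ← mul_pow]
    norm_num
    rw [← mul_pow]
    norm_num
  linear_combination (-(c₁ (k:ℕ) * c₂ (m:ℕ) * ((Nat.factorial n : ℕ) : ℂ))) * e
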